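/- Every T1 subshift Σ on the alphabet A is k-traceable for some k ∈ ℕ*: there exist k ≥ 1, an alphabet B ⊆ A^k, and a onesided cellular automaton F on B such that Σ = ⋃_{0≤q<k} π_q(τ(F)). -/

import Mathlib

variable {A : Type*}

/-- The onesided shift on `A^ℕ`. -/
def shiftN (z : ℕ → A) : ℕ → A := fun i => z (i + 1)

/-- The twosided shift on `A^ℤ`. -/
def shiftZ (x : ℤ → A) : ℤ → A := fun i => x (i + 1)

/-- A (onesided) subshift: a closed, shift-stable set of infinite words. -/
def IsSubshift [TopologicalSpace A] (S : Set (ℕ → A)) : Prop :=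
  IsClosed S ∧ ∀ z ∈ S, shiftN z ∈ S

/-- A 2-SFT: a subshift given by a set of forbidden words of length 2. -/
def IsTwoSFT (S : Set (ℕ → A)) : Prop :=
  ∃ Fb : Set (A × A), S = {z | ∀ i : ℕ, (z i, z (i + 1)) ∉ Fb}

/-- A k-SFT: a subshift given by a set of forbidden words of length k. -/
def IsKSFT (k : ℕ) (S : Set (ℕ → A)) : Prop :=
  ∃ Fb : Set (Fin k → A), S = {z | ∀ i : ℕ, (fun j : Fin k => z (i + (j : ℕ))) ∉ Fb}

/-- A subshift of finite type. -/
def IsSFT (S : Set (ℕ → A)) : Prop := ∃ k : ℕ, IsKSFT k S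

/-- A cellular automaton: a continuous self-map of `A^ℤ` commuting with the shift. -/
def IsCA [TopologicalSpace A] (F : (ℤ → A) → (ℤ → A)) : Prop :=
  Continuous F ∧ ∀ x, F (shiftZ x) = shiftZ (F x)

/-- The trace of `F` with initial condition `x`: the 0th column of the space-time diagram. -/
def caTrace (F : (ℤ → A) → (ℤ → A)) (x : ℤ → A) : ℕ → A := fun j => F^[j] x 0

/-- The trace subshift of `F`. -/
def traceSubshift (F : (ℤ → A) → (ℤ → A)) : Set (ℕ → A) := Set.range (caTrace F)

/-- A subshift is traceable if it is the trace subshift of some CA. -/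
def Traceable [TopologicalSpace A] (S : Set (ℕ → A)) : Prop :=
  ∃ F : (ℤ → A) → (ℤ → A), IsCA F ∧ traceSubshift F = S

/-- The q-th projection of an infinite word over the alphabet `A^k`. -/
def proj {k : ℕ} (q : Fin k) (z : ℕ → (Fin k → A)) : ℕ → A := fun j => z j q

/-- `π(Γ)`: the union of all projections. -/
def projAll {k : ℕ} (Γ : Set (ℕ → (Fin k → A))) : Set (ℕ → A) :=
  ⋃ q : Fin k, proj q '' Γ

/-- A subshift `S` on `A` is T1 if there is a 2-SFT `Γ ⊆ (A^k)^ℕ` with `π₀(Γ) = π(Γ) = S`. -/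
def IsT1 (S : Set (ℕ → A)) : Prop :=
  ∃ k : ℕ, ∃ hk : 0 < k, ∃ Γ : Set (ℕ → (Fin k → A)),
    IsTwoSFT Γ ∧ proj (⟨0, hk⟩ : Fin k) '' Γ = S ∧ projAll Γ = S

/-- A onesided CA: one admitting a local rule of anchor 0. -/
def IsOnesidedCA {C : Type*} (F : (ℤ → C) → (ℤ → C)) : Prop :=
  ∃ d : ℕ, ∃ f : (Fin d → C) → C, ∀ x i, F x i = f (fun j => x (i + (j : ℕ)))

/-- `S` is the k-trace of a onesided CA on some alphabet `B ⊆ A^k`. -/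
def KTraceable (k : ℕ) (S : Set (ℕ → A)) : Prop :=
  ∃ B : Set (Fin k → A), ∃ F : (ℤ → ↥B) → (ℤ → ↥B), IsOnesidedCA F ∧
    S = ⋃ q : Fin k, (fun z : ℕ → ↥B => fun j => ((z j : Fin k → A) q)) '' Set.range (caTrace F)

/-- `S` is a factor of `Γ`: a surjective continuous shift-commuting map from `Γ` onto `S`. -/
def IsFactorOf {B : Type*} [TopologicalSpace A] [TopologicalSpace B]
    (S : Set (ℕ → A)) (Γ : Set (ℕ → B)) : Prop :=
  ∃ φ : (ℕ → B) → (ℕ → A), ContinuousOn φ Γ ∧ φ '' Γ = S ∧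
    ∀ z ∈ Γ, φ (shiftN z) = shiftN (φ z)

/-- The language of a subshift: all finite factors of its elements. -/
def lang (S : Set (ℕ → A)) : Language A :=
  {w | ∃ z ∈ S, ∃ i : ℕ, w = List.ofFn (fun j : Fin w.length => z (i + (j : ℕ)))}

/-- A transitive subshift. -/
def IsTransitiveSubshift (S : Set (ℕ → A)) : Prop :=
  ∀ u ∈ lang S, ∀ v ∈ lang S, ∃ w : List A, u ++ w ++ v ∈ lang S

/-- A T2 subshift: sofic, and including an infinite transitive subshift. -/
def IsT2 [TopologicalSpace A] (S : Set (ℕ → A)) : Prop :=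
  (lang S).IsRegular ∧ ∃ Γ ⊆ S, IsSubshift Γ ∧ Γ.Infinite ∧ IsTransitiveSubshift Γ

/-- `B^ω`: infinite concatenations of words from `B ⊆ A^k`. -/
def Bomega {k : ℕ} (B : Set (Fin k → A)) : Set (ℕ → A) :=
  {z | ∀ i : ℕ, (fun q : Fin k => z (i * k + (q : ℕ))) ∈ B}

/-- A T3 subshift: T0 via a map `φ`, together with a periodic word `w ∉ φ(A)^*`. -/
def IsT3 (S : Set (ℕ → A)) : Prop :=
  ∃ φ : A → A, (∀ a : A, (fun j => φ^[j] a) ∈ S) ∧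
    ∃ w : List A, w ≠ [] ∧ (∃ a ∈ w, a ∉ Set.range φ) ∧
      ∃ z ∈ S, (∀ j : ℕ, z (j + w.length) = z j) ∧ ∀ i : Fin w.length, z (i : ℕ) = w.get i

/-- Every T1 subshift is k-traceable for some `k ≥ 1`. -/
theorem stmt3 [Fintype A] [TopologicalSpace A] [DiscreteTopology A]
    (hA : 2 ≤ Fintype.card A) (S : Set (ℕ → A)) (hS : IsSubshift S) (hT1 : IsT1 S) :
    ∃ k : ℕ, 0 < k ∧ KTraceable k S := by
  classical
  obtain ⟨k, hk, Γ, ⟨Fb, hΓ⟩, hπ0, hπ⟩ := hT1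
  subst hΓ
  set Γ : Set (ℕ → (Fin k → A)) := {z | ∀ i : ℕ, (z i, z (i + 1)) ∉ Fb} with hΓdef
  refine ⟨k, hk, ?_⟩
  -- the alphabet: letters occurring in Γ
  set L : Set (Fin k → A) := {a | ∃ z ∈ Γ, ∃ n : ℕ, z n = a} with hLdef
  -- every letter has an allowed successor
  have hsucc : ∀ a : ↥L, ∃ b : ↥L, ((a : Fin k → A), (b : Fin k → A)) ∉ Fb := by
    rintro ⟨a, z, hz, n, hn⟩
    exact ⟨⟨z (n + 1), z, hz, n + 1, rfl⟩, by simpa [hn] using hz n⟩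
  choose succ hsuccP using hsucc
  set τ : ↥L → ↥L → ↥L := fun a b =>
    if ((a : Fin k → A), (b : Fin k → A)) ∉ Fb then b else succ a with hτdef
  have hτ : ∀ a b : ↥L, ((a : Fin k → A), ((τ a b) : Fin k → A)) ∉ Fb := by
    intro a b
    by_cases h : ((a : Fin k → A), (b : Fin k → A)) ∉ Fb
    · simpa [hτdef, h] using h
    · rw [not_not] at h
      simp only [hτdef, h, not_true_eq_false, if_false]
      exact hsuccP a
  have hτeq : ∀ (a b : ↥L), ((a : Fin k → A), (b : Fin k → A)) ∉ Fb → τ a b = b := by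
    intro a b h; simp [hτdef, h]
  set F : (ℤ → ↥L) → (ℤ → ↥L) := fun x i => τ (x i) (x (i + 1)) with hFdef
  -- every trace of F lies in Γ (after coercion)
  have traceIn : ∀ x : ℤ → ↥L, (fun j => (caTrace F x j).1) ∈ Γ := by
    intro x i
    show ((caTrace F x i).1, (caTrace F x (i + 1)).1) ∉ Fb
    have : caTrace F x (i + 1) = τ (F^[i] x 0) (F^[i] x 1) := by
      simp only [caTrace, Function.iterate_succ_apply']
      rfl
    rw [this]
    exact hτ _ _
  -- every element of Γ is a trace of F
  have traceOnto : ∀ z ∈ Γ, ∃ x : ℤ → ↥L,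
      ∀ j, (caTrace F x j).1 = z j := by
    intro z hz
    refine ⟨fun i => ⟨z i.toNat, z, hz, i.toNat, rfl⟩, ?_⟩
    have key : ∀ j : ℕ, ∀ i : ℤ, 0 ≤ i →
        (F^[j] (fun i : ℤ => (⟨z i.toNat, z, hz, i.toNat, rfl⟩ : ↥L)) i).1
          = z (i.toNat + j) := by
      intro j
      induction j with
      | zero => intro i hi; simp
      | succ j ih =>
        intro i hi
        rw [Function.iterate_succ_apply']
        show (τ (F^[j] _ i) (F^[j] _ (i + 1))).1 = _
        have h1 := ih i hi
        have h2 := ih (i + 1) (by omega)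
        have h3 : (i + 1).toNat = i.toNat + 1 := by omega
        rw [h3] at h2
        have hpair : ((F^[j] (fun i : ℤ => (⟨z i.toNat, z, hz, i.toNat, rfl⟩ : ↥L)) i).1,
            (F^[j] (fun i : ℤ => (⟨z i.toNat, z, hz, i.toNat, rfl⟩ : ↥L)) (i + 1)).1)
            ∉ Fb := by
          rw [h1, h2]
          have := hz (i.toNat + j)
          simpa [add_assoc, add_comm, add_left_comm] using this
        rw [hτeq _ _ hpair, h2]
        ring_nf
    intro j
    have := key j 0 le_rfl
    simpa [caTrace] using this
  refine ⟨L, F, ⟨2, fun g => τ (g 0) (g 1), ?_⟩, ?_⟩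
  · intro x i
    have h0 : ((((0 : Fin 2) : ℕ) : ℤ)) = 0 := rfl
    have h1 : ((((1 : Fin 2) : ℕ) : ℤ)) = 1 := rfl
    simp [hFdef, h0, h1]
  · ext s
    constructor
    · intro hs
      rw [← hπ] at hs
      obtain ⟨T, ⟨q, rfl⟩, hT⟩ := hs
      obtain ⟨z, hzΓ, rfl⟩ := hT
      obtain ⟨x, hx⟩ := traceOnto z hzΓ
      refine Set.mem_iUnion.2 ⟨q, ⟨caTrace F x, ⟨x, rfl⟩, ?_⟩⟩
      funext j
      simp [proj, hx j]
    · intro hs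
      obtain ⟨q, t, ⟨x, rfl⟩, rfl⟩ := Set.mem_iUnion.1 hs
      rw [← hπ]
      refine Set.mem_iUnion.2 ⟨q, ⟨fun j => (caTrace F x j).1, traceIn x, rfl⟩⟩
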